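/- The attractor space is independent of the probability distribution: if Φ(ρ) = Σ_{i=1}^m p_i · U_i ρ U_i† and Ψ(ρ) = Σ_{i=1}^m q_i · U_i ρ U_i† are two random unitary operations built from the same unitary matrices U_i but possibly different probabilities p_i > 0, q_i > 0 (with Σ p_i = Σ q_i = 1), then for every λ ∈ ℂ with |λ| = 1 the eigenspaces coincide: Ker(Φ − λ·id) = Ker(Ψ − λ·id). -/

import Mathlib

open Matrix BigOperators
noncomputable def emb {d : ℕ} (X : Matrix (Fin d) (Fin d) ℂ) : EuclideanSpace ℂ (Fin d × Fin d) :=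
  (WithLp.equiv 2 _).symm (fun ij => X ij.1 ij.2)

lemma emb_inner {d : ℕ} (X Y : Matrix (Fin d) (Fin d) ℂ) :
    inner ℂ (emb X) (emb Y) = (Xᴴ * Y).trace := by
  simp only [emb, PiLp.inner_apply, Matrix.trace, Matrix.diag, Matrix.mul_apply,
    Matrix.conjTranspose_apply, Fintype.sum_prod_type, RCLike.inner_apply, WithLp.equiv_symm_apply, PiLp.toLp_apply, Finset.sum_congr]
  rw [Finset.sum_comm]
  simp [mul_comm]

lemma emb_injective {d : ℕ} : Function.Injective (emb (d := d)) := by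
  intro X Y h
  ext i j
  have := congrArg (fun v => v (i, j)) h
  simpa [emb] using this

lemma emb_smul {d : ℕ} (c : ℂ) (X : Matrix (Fin d) (Fin d) ℂ) : emb (c • X) = c • emb X := by
  ext ij; simp [emb]

lemma emb_norm_conj {d : ℕ} (X : Matrix (Fin d) (Fin d) ℂ) (V : Matrix (Fin d) (Fin d) ℂ)
    (hV : V ∈ Matrix.unitaryGroup (Fin d) ℂ) : ‖emb (V * X * Vᴴ)‖ = ‖emb X‖ := by
  have h1 : Vᴴ * V = 1 := Matrix.mem_unitaryGroup_iff'.mp hV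
  have h2 : V * Vᴴ = 1 := Matrix.mem_unitaryGroup_iff.mp hV
  have key : inner ℂ (emb (V * X * Vᴴ)) (emb (V * X * Vᴴ)) = inner ℂ (emb X) (emb X) := by
    rw [emb_inner, emb_inner]
    simp only [Matrix.conjTranspose_mul, Matrix.conjTranspose_conjTranspose]
    simp only [Matrix.mul_assoc]
    rw [← Matrix.mul_assoc Vᴴ V, h1, Matrix.one_mul, Matrix.trace_mul_comm V]
    simp only [Matrix.mul_assoc]
    rw [h1, Matrix.mul_one]
  rw [inner_self_eq_norm_sq_to_K (𝕜 := ℂ), inner_self_eq_norm_sq_to_K (𝕜 := ℂ)] at key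
  have h3 : ‖emb (V * X * Vᴴ)‖ ^ 2 = ‖emb X‖ ^ 2 := by
    exact_mod_cast key
  nlinarith [norm_nonneg (emb (V * X * Vᴴ)), norm_nonneg (emb X)]

lemma key {d m : ℕ} (U : Fin m → Matrix (Fin d) (Fin d) ℂ)
    (hU : ∀ i, U i ∈ Matrix.unitaryGroup (Fin d) ℂ)
    (p : Fin m → ℝ) (hp : ∀ i, 0 < p i) (hpsum : ∑ i, p i = 1)
    (lam : ℂ) (hlam : ‖lam‖ = 1)
    (X : Matrix (Fin d) (Fin d) ℂ)
    (h : ∑ i, (p i : ℂ) • (U i * X * (U i)ᴴ) = lam • X) :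
    ∀ i, U i * X * (U i)ᴴ = lam • X := by
  set A : Fin m → Matrix (Fin d) (Fin d) ℂ := fun i => U i * X * (U i)ᴴ with hA
  set c : Fin m → ℂ := fun i => inner ℂ (emb X) (emb (A i)) with hc
  set N : ℝ := ‖emb X‖ with hN
  have hnormA : ∀ i, ‖emb (A i)‖ = N := fun i => emb_norm_conj X (U i) (hU i)
  -- sum identity
  have hsum : ∑ i, (p i : ℂ) * c i = lam * (N : ℂ) ^ 2 := by
    have h2 := congrArg (fun Y => inner ℂ (emb X) (emb Y)) h
    beta_reduce at h2
    have e1 : ∀ Y : Matrix (Fin d) (Fin d) ℂ, inner ℂ (emb X) (emb Y) = (Xᴴ * Y).trace :=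
      emb_inner X
    rw [e1, e1, Matrix.mul_sum, Matrix.trace_sum] at h2
    simp only [Matrix.mul_smul, Matrix.trace_smul, smul_eq_mul] at h2
    have e2 : (Xᴴ * X).trace = (N : ℂ) ^ 2 := by
      rw [← e1, inner_self_eq_norm_sq_to_K, hN]; norm_num
    rw [e2] at h2
    simpa only [hc, e1] using h2
  -- bound
  have hbound : ∀ i, ‖c i‖ ≤ N ^ 2 := by
    intro i
    have := norm_inner_le_norm (𝕜 := ℂ) (emb X) (emb (A i))
    rw [hnormA i] at this
    simpa [sq] using this
  set r : Fin m → ℝ := fun i => ((starRingEnd ℂ) lam * c i).re with hr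
  have hrle : ∀ i, r i ≤ N ^ 2 := by
    intro i
    calc r i ≤ ‖(starRingEnd ℂ) lam * c i‖ := Complex.re_le_norm _
      _ = ‖c i‖ := by
            rw [norm_mul, Complex.norm_conj, hlam, one_mul]
      _ ≤ N ^ 2 := hbound i
  have hrsum : ∑ i, p i * r i = N ^ 2 := by
    have : ((starRingEnd ℂ) lam * ∑ i, (p i : ℂ) * c i).re = ∑ i, p i * r i := by
      rw [Finset.mul_sum, Complex.re_sum]
      congr 1; ext i
      rw [hr]
      rw [show (starRingEnd ℂ) lam * ((p i : ℂ) * c i) = (p i : ℂ) * ((starRingEnd ℂ) lam * c i) by ring]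
      simp [Complex.re_ofReal_mul]
    rw [hsum] at this
    rw [← this, ← mul_assoc]
    have : (starRingEnd ℂ) lam * lam = 1 := by
      rw [mul_comm, Complex.mul_conj, ← Complex.sq_norm, hlam]; norm_num
    rw [this, one_mul]
    norm_cast
  have hreq : ∀ i, r i = N ^ 2 := by
    have hle : ∀ i ∈ Finset.univ, p i * r i ≤ p i * N ^ 2 := fun i _ =>
      mul_le_mul_of_nonneg_left (hrle i) (hp i).le
    have hseq : ∑ i, p i * r i = ∑ i, p i * N ^ 2 := by
      rw [hrsum, ← Finset.sum_mul, hpsum, one_mul]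
    have := (Finset.sum_eq_sum_iff_of_le hle).mp hseq
    intro i
    have hi := this i (Finset.mem_univ i)
    exact mul_left_cancel₀ (hp i).ne' hi
  intro i
  have hz : ‖emb (A i) - lam • emb X‖ ^ 2 = 0 := by
    rw [norm_sub_sq (𝕜 := ℂ)]
    have h1 : ‖emb (A i)‖ = N := hnormA i
    have h2 : ‖lam • emb X‖ = N := by
      rw [norm_smul]; simp [hlam, hN]
    have h3 : (inner ℂ (emb (A i)) (lam • emb X)).re = N ^ 2 := by
      rw [inner_smul_right]
      have e : inner ℂ (emb (A i)) (emb X) = (starRingEnd ℂ) (c i) :=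
        (inner_conj_symm (emb (A i)) (emb X)).symm
      rw [e]
      have e' : lam * (starRingEnd ℂ) (c i) = (starRingEnd ℂ) ((starRingEnd ℂ) lam * c i) := by
        rw [_root_.map_mul, Complex.conj_conj]
      rw [e', Complex.conj_re]
      exact hreq i
    simp only [RCLike.re_to_complex]
    rw [h1, h2, h3]; ring
  have hz2 : emb (A i) = lam • emb X := by
    have := pow_eq_zero_iff (n := 2) (by norm_num) |>.mp hz
    rwa [norm_eq_zero, sub_eq_zero] at this
  have : emb (A i) = emb (lam • X) := by rw [hz2, emb_smul]
  exact emb_injective this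

theorem stmt_13 {d m : ℕ} (hd : 1 ≤ d)
    (U : Fin m → Matrix (Fin d) (Fin d) ℂ)
    (hU : ∀ i, U i ∈ Matrix.unitaryGroup (Fin d) ℂ)
    (p q : Fin m → ℝ)
    (hp : ∀ i, 0 < p i) (hq : ∀ i, 0 < q i)
    (hpsum : ∑ i, p i = 1) (hqsum : ∑ i, q i = 1)
    (Φ Ψ : Matrix (Fin d) (Fin d) ℂ → Matrix (Fin d) (Fin d) ℂ)
    (hΦ : ∀ ρ, Φ ρ = ∑ i, (p i : ℂ) • (U i * ρ * (U i)ᴴ))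
    (hΨ : ∀ ρ, Ψ ρ = ∑ i, (q i : ℂ) • (U i * ρ * (U i)ᴴ))
    (lam : ℂ) (hlam : ‖lam‖ = 1) :
    {X : Matrix (Fin d) (Fin d) ℂ | Φ X = lam • X} =
      {X : Matrix (Fin d) (Fin d) ℂ | Ψ X = lam • X} := by
  have conv : ∀ (w : Fin m → ℝ), (∑ i, w i = 1) →
      ∀ X : Matrix (Fin d) (Fin d) ℂ, (∀ i, U i * X * (U i)ᴴ = lam • X) →
      ∑ i, (w i : ℂ) • (U i * X * (U i)ᴴ) = lam • X := by
    intro w hw X hX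
    calc ∑ i, (w i : ℂ) • (U i * X * (U i)ᴴ) = ∑ i, (w i : ℂ) • (lam • X) := by
          simp_rw [fun i => hX i]
      _ = (∑ i, (w i : ℂ)) • (lam • X) := (Finset.sum_smul).symm
      _ = lam • X := by
          have : (∑ i, (w i : ℂ)) = 1 := by
            rw [← Complex.ofReal_sum, hw, Complex.ofReal_one]
          rw [this, one_smul]
  ext X
  simp only [Set.mem_setOf_eq, hΦ, hΨ]
  constructor
  · intro h
    exact conv q hqsum X (key U hU p hp hpsum lam hlam X h)
  · intro h
    exact conv p hpsum X (key U hU q hq hqsum lam hlam X h)
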